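/- Fix constants b ∈ ℝ, σ ∈ ℝ, μ > 0, β > 0, γ > 0, a continuous function W : [0,∞) → ℝ with W(0) = 0, and initial values X₀ ∈ ℝ, V₀ ≥ 0. Suppose (X, V) and (X', V') are two pairs of continuous functions from [0,∞) to ℝ satisfying, for all t ≥ 0, X(t) = X₀ + ∫₀ᵗ [b + μ·max(−X(s), V(s))] ds + σW(t) and V(t) = V₀ + ∫₀ᵗ [β·max(−(X(s)+V(s)), 0) − γV(s)] ds (and likewise for (X', V')). Then X(t) = X'(t) and V(t) = V'(t) for all t ≥ 0; i.e., pathwise uniqueness holds for the Halfin–Whitt limit system. -/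

import Mathlib

open Set intervalIntegral MeasureTheory

private lemma hw_deriv_aux {g : ℝ → ℝ} (hg : ContinuousOn g (Set.Ici 0))
    {t : ℝ} (ht : 0 ≤ t) :
    HasDerivWithinAt (fun u => ∫ s in (0:ℝ)..u, g s) (g t) (Set.Ici t) t := by
  have hsub : Set.Ioi t ⊆ Set.Ici (0:ℝ) := fun x hx => le_of_lt (lt_of_le_of_lt ht hx)
  have hint : IntervalIntegrable g volume 0 t := by
    apply ContinuousOn.intervalIntegrable
    apply hg.mono
    rw [Set.uIcc_of_le ht]
    exact fun x hx => hx.1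
  have hmeas : StronglyMeasurableAtFilter g (nhdsWithin t (Set.Ioi t)) volume := by
    refine AEStronglyMeasurable.stronglyMeasurableAtFilter_of_mem
      (hg.aestronglyMeasurable measurableSet_Ici) ?_
    exact Filter.mem_of_superset self_mem_nhdsWithin hsub
  have hcont : ContinuousWithinAt g (Set.Ioi t) t := (hg t ht).mono hsub
  exact intervalIntegral.integral_hasDerivWithinAt_right hint hmeas hcont

private lemma hw_lip (σ μ β γ : ℝ) (hμ : 0 < μ) (hβ : 0 < β) (hγ : 0 < γ) (W : ℝ → ℝ) (t : ℝ) :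
    LipschitzWith (Real.toNNReal (max μ (2*β + γ)))
      (fun p : ℝ × ℝ => ((b' : ℝ) + μ * max (-(p.1 + σ * W t)) p.2,
        β * max (-(p.1 + σ * W t + p.2)) 0 - γ * p.2)) := by
  apply LipschitzWith.of_dist_le_mul
  intro p q
  have hd0 : (0:ℝ) ≤ dist p q := dist_nonneg
  have h1 : |p.1 - q.1| ≤ dist p q := by
    rw [← Real.dist_eq, Prod.dist_eq]; exact le_max_left _ _
  have h2 : |p.2 - q.2| ≤ dist p q := by
    rw [← Real.dist_eq, Prod.dist_eq]; exact le_max_right _ _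
  have hm1 : |max (-(p.1 + σ * W t)) p.2 - max (-(q.1 + σ * W t)) q.2| ≤ dist p q := by
    refine le_trans (abs_max_sub_max_le_max _ _ _ _) (max_le ?_ h2)
    have he : -(p.1 + σ * W t) - -(q.1 + σ * W t) = -(p.1 - q.1) := by ring
    rw [he, abs_neg]; exact h1
  have hm2 : |max (-(p.1 + σ * W t + p.2)) 0 - max (-(q.1 + σ * W t + q.2)) 0|
      ≤ 2 * dist p q := by
    refine le_trans (abs_max_sub_max_le_max _ _ _ _) (max_le ?_ (by simpa using by linarith))
    have he : -(p.1 + σ * W t + p.2) - -(q.1 + σ * W t + q.2)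
        = -((p.1 - q.1) + (p.2 - q.2)) := by ring
    rw [he, abs_neg]
    calc |(p.1 - q.1) + (p.2 - q.2)| ≤ |p.1 - q.1| + |p.2 - q.2| := abs_add_le _ _
      _ ≤ 2 * dist p q := by linarith
  have hKc : (Real.toNNReal (max μ (2*β + γ)) : ℝ) = max μ (2*β + γ) :=
    Real.coe_toNNReal _ (le_max_of_le_left hμ.le)
  rw [Prod.dist_eq, Real.dist_eq, Real.dist_eq, hKc]
  have hμle : μ ≤ max μ (2*β + γ) := le_max_left _ _
  have hble : 2*β + γ ≤ max μ (2*β + γ) := le_max_right _ _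
  apply max_le
  · have he : (b' + μ * max (-(p.1 + σ * W t)) p.2) - (b' + μ * max (-(q.1 + σ * W t)) q.2)
        = μ * (max (-(p.1 + σ * W t)) p.2 - max (-(q.1 + σ * W t)) q.2) := by ring
    rw [he, abs_mul, abs_of_pos hμ]
    nlinarith [abs_nonneg (max (-(p.1 + σ * W t)) p.2 - max (-(q.1 + σ * W t)) q.2)]
  · have he : (β * max (-(p.1 + σ * W t + p.2)) 0 - γ * p.2)
        - (β * max (-(q.1 + σ * W t + q.2)) 0 - γ * q.2)
        = β * (max (-(p.1 + σ * W t + p.2)) 0 - max (-(q.1 + σ * W t + q.2)) 0)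
          - γ * (p.2 - q.2) := by ring
    rw [he]
    calc |_ - _| ≤ |β * (max (-(p.1 + σ * W t + p.2)) 0 - max (-(q.1 + σ * W t + q.2)) 0)|
          + |γ * (p.2 - q.2)| := abs_sub _ _
      _ = β * |max (-(p.1 + σ * W t + p.2)) 0 - max (-(q.1 + σ * W t + q.2)) 0|
          + γ * |p.2 - q.2| := by rw [abs_mul, abs_mul, abs_of_pos hβ, abs_of_pos hγ]
      _ ≤ max μ (2*β + γ) * dist p q := by nlinarith

theorem hw_limit_pathwise_uniqueness
    (b σ μ β γ : ℝ) (hμ : 0 < μ) (hβ : 0 < β) (hγ : 0 < γ)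
    (W : ℝ → ℝ) (hW : ContinuousOn W (Set.Ici 0)) (hW0 : W 0 = 0)
    (X₀ V₀ : ℝ) (hV₀ : 0 ≤ V₀)
    (X V X' V' : ℝ → ℝ)
    (hX : ContinuousOn X (Set.Ici 0)) (hV : ContinuousOn V (Set.Ici 0))
    (hX' : ContinuousOn X' (Set.Ici 0)) (hV' : ContinuousOn V' (Set.Ici 0))
    (heqX : ∀ t : ℝ, 0 ≤ t →
      X t = X₀ + (∫ s in (0:ℝ)..t, (b + μ * max (-(X s)) (V s))) + σ * W t)
    (heqV : ∀ t : ℝ, 0 ≤ t →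
      V t = V₀ + ∫ s in (0:ℝ)..t, (β * max (-(X s + V s)) 0 - γ * V s))
    (heqX' : ∀ t : ℝ, 0 ≤ t →
      X' t = X₀ + (∫ s in (0:ℝ)..t, (b + μ * max (-(X' s)) (V' s))) + σ * W t)
    (heqV' : ∀ t : ℝ, 0 ≤ t →
      V' t = V₀ + ∫ s in (0:ℝ)..t, (β * max (-(X' s + V' s)) 0 - γ * V' s)) :
    ∀ t : ℝ, 0 ≤ t → X t = X' t ∧ V t = V' t := by
  intro T hT
  set K : NNReal := Real.toNNReal (max μ (2*β + γ)) with hK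
  set v : ℝ → ℝ × ℝ → ℝ × ℝ := fun t p =>
    (b + μ * max (-(p.1 + σ * W t)) p.2,
      β * max (-(p.1 + σ * W t + p.2)) 0 - γ * p.2) with hv
  have hvlip : ∀ t, LipschitzWith K (v t) := fun t => hw_lip (b' := b) σ μ β γ hμ hβ hγ W t
  set f : ℝ → ℝ × ℝ := fun t => (X t - σ * W t, V t) with hf
  set g : ℝ → ℝ × ℝ := fun t => (X' t - σ * W t, V' t) with hgdef
  -- continuity
  have hfc : ContinuousOn f (Set.Icc 0 T) :=
    (((hX.sub (continuousOn_const.mul hW)).prodMk hV).mono (Set.Icc_subset_Ici_self))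
  have hgc : ContinuousOn g (Set.Icc 0 T) :=
    (((hX'.sub (continuousOn_const.mul hW)).prodMk hV').mono (Set.Icc_subset_Ici_self))
  -- derivative conditions
  have key : ∀ (Y Z : ℝ → ℝ), ContinuousOn Y (Set.Ici 0) → ContinuousOn Z (Set.Ici 0) →
      (∀ t : ℝ, 0 ≤ t →
        Y t = X₀ + (∫ s in (0:ℝ)..t, (b + μ * max (-(Y s)) (Z s))) + σ * W t) →
      (∀ t : ℝ, 0 ≤ t →
        Z t = V₀ + ∫ s in (0:ℝ)..t, (β * max (-(Y s + Z s)) 0 - γ * Z s)) →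
      ∀ t ∈ Set.Ico 0 T, HasDerivWithinAt (fun u => (Y u - σ * W u, Z u))
        (v t (Y t - σ * W t, Z t)) (Set.Ici t) t := by
    intro Y Z hYc hZc hYeq hZeq t ht
    have ht0 : (0:ℝ) ≤ t := ht.1
    have h1c : ContinuousOn (fun s => b + μ * max (-(Y s)) (Z s)) (Set.Ici 0) :=
      continuousOn_const.add (continuousOn_const.mul (hYc.neg.sup hZc))
    have h2c : ContinuousOn (fun s => β * max (-(Y s + Z s)) 0 - γ * Z s) (Set.Ici 0) :=
      (continuousOn_const.mul ((hYc.add hZc).neg.sup continuousOn_const)).sub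
        (continuousOn_const.mul hZc)
    have hd1 : HasDerivWithinAt (fun u => Y u - σ * W u)
        (b + μ * max (-(Y t)) (Z t)) (Set.Ici t) t := by
      have := (hw_deriv_aux h1c ht0).const_add X₀
      refine this.congr (fun x hx => ?_) ?_
      · have hx0 : (0:ℝ) ≤ x := le_trans ht0 hx
        rw [hYeq x hx0]; ring
      · rw [hYeq t ht0]; ring
    have hd2 : HasDerivWithinAt Z
        (β * max (-(Y t + Z t)) 0 - γ * Z t) (Set.Ici t) t := by
      have := (hw_deriv_aux h2c ht0).const_add V₀
      refine this.congr (fun x hx => ?_) ?_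
      · exact hZeq x (le_trans ht0 hx)
      · exact hZeq t ht0
    have : v t (Y t - σ * W t, Z t) =
        (b + μ * max (-(Y t)) (Z t), β * max (-(Y t + Z t)) 0 - γ * Z t) := by
      simp only [hv]
      congr 2 <;> ring_nf
    rw [this]
    exact hd1.prodMk hd2
  have hf' := key X V hX hV heqX heqV
  have hg' := key X' V' hX' hV' heqX' heqV'
  have h0 : f 0 = g 0 := by
    simp only [hf, hgdef]
    have e1 := heqX 0 le_rfl
    have e2 := heqV 0 le_rfl
    have e3 := heqX' 0 le_rfl
    have e4 := heqV' 0 le_rfl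
    simp only [intervalIntegral.integral_same, hW0, mul_zero, add_zero] at e1 e2 e3 e4
    rw [e1, e2, e3, e4]
  have hdist : dist (f T) (g T) ≤ 0 * Real.exp (K * (T - 0)) :=
    dist_le_of_trajectories_ODE hvlip hfc hf' hgc hg'
      (by rw [h0, dist_self]) T ⟨hT, le_rfl⟩
  rw [zero_mul, dist_le_zero] at hdist
  have h1 : X T - σ * W T = X' T - σ * W T := congrArg Prod.fst hdist
  have h2 : V T = V' T := congrArg Prod.snd hdist
  exact ⟨by linarith, h2⟩
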